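/- Let G be a finite bipartite S_{1,1,3}-free graph and let T be an inclusionwise maximal induced copy of the simple tree T_k in G with k ≥ 3, with centre u, A_0 = {a_1,...,a_k} the neighbours of u in T, and B_0 = {b_1,...,b_k} the leaves of T with a_i adjacent to b_i. Define B_1 = N(B_0)\A_0; B_1' ⊆ B_1 the set of vertices not in A_0 with exactly one neighbour in B_0; B_1'' ⊆ B_1 the set of vertices adjacent to all vertices of B_0; A_1 = N(A_0)\({u} ∪ B_0); C = N(u)\(A_0 ∪ B_1); D_1 = N(A_1)\(C ∪ A_0 ∪ B_1); D_2 = N(B_1)\({u} ∪ B_0 ∪ A_1). Then: (i) every vertex of B_1 is adjacent to u; (ii) every vertex of A_1 is adjacent to every vertex of A_0; (iii) no vertex of C has a neighbour outside {u} ∪ A_1; (iv) no vertex of D_1 has a neighbour outside A_1; (v) B_1 = B_1' ∪ B_1''; (vi) B_1' = ∅ or B_1'' = ∅; (vii) no vertex of B_1' has a neighbour outside {u} ∪ B_0 ∪ A_1; (viii) no vertex of D_2 has a neighbour outside B_1. -/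

import Mathlib

open SimpleGraph

/-- `S` is an independent set in `G`: pairwise non-adjacent vertices. -/
def IndepOn {V : Type*} (G : SimpleGraph V) (S : Set V) : Prop :=
  S.Pairwise fun u v => ¬ G.Adj u v

/-- `NSet G U` is the set of vertices adjacent to at least one vertex of `U`. -/
def NSet {V : Type*} (G : SimpleGraph V) (U : Set V) : Set V :=
  {v | ∃ u ∈ U, G.Adj u v}

/-- `(W, B)` is a bipartition of `G` into two independent parts covering all vertices. -/
def IsBipartition {V : Type*} (G : SimpleGraph V) (W B : Set V) : Prop :=
  W ∪ B = Set.univ ∧ Disjoint W B ∧ IndepOn G W ∧ IndepOn G B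

/-- A bipartite graph `G` with parts `W` and `B` is irreducible if
(a) `|W| = |B| - 1`, (b) every nonempty `A ⊆ W` satisfies `|A| < |N(A) ∩ B|`,
and (c) `G` is connected. -/
def IrreducibleBip {V : Type*} (G : SimpleGraph V) (W B : Set V) : Prop :=
  IsBipartition G W B ∧
  W.ncard + 1 = B.ncard ∧
  (∀ A ⊆ W, A.Nonempty → A.ncard < (NSet G A ∩ B).ncard) ∧
  G.Connected

/-- The simple tree `T_k`: the star `K_{1,k}` with each edge subdivided once.
Vertex `0` is the centre, vertices `1,…,k` are the subdivision vertices `a_i`,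
and vertices `k+1,…,2k` are the leaves `b_i = i + k`. -/
def simpleTree (k : ℕ) : SimpleGraph (Fin (2 * k + 1)) :=
  SimpleGraph.fromRel fun i j =>
    (i.val = 0 ∧ 1 ≤ j.val ∧ j.val ≤ k) ∨ (1 ≤ i.val ∧ i.val ≤ k ∧ j.val = i.val + k)

/-- The tree `S_{1,1,3}`: three leaves at distances 1, 1, 3 from the unique degree-3
vertex `0`. Edges: 0-1, 0-2, 0-3, 3-4, 4-5. -/
def S113 : SimpleGraph (Fin 6) :=
  SimpleGraph.fromRel fun i j =>
    (i = 0 ∧ j = 1) ∨ (i = 0 ∧ j = 2) ∨ (i = 0 ∧ j = 3) ∨ (i = 3 ∧ j = 4) ∨ (i = 4 ∧ j = 5)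

/-- The claw `K_{1,3}`-freeness. -/
def ClawFree {V : Type*} (G : SimpleGraph V) : Prop :=
  IsEmpty (completeBipartiteGraph (Fin 1) (Fin 3) ↪g G)

/-- `(u, a, b)` is an induced copy of the simple tree `T_k` in `G`: `u` is the centre,
`a i` are the neighbours of `u`, `b i` are the leaves with `a i` adjacent to `b i`,
all vertices are distinct, and there are no other adjacencies among these vertices. -/
def IsSimpleTreeCopy {V : Type*} (G : SimpleGraph V) (k : ℕ) (u : V)
    (a b : Fin k → V) : Prop :=
  Function.Injective a ∧ Function.Injective b ∧
  (∀ i, a i ≠ u) ∧ (∀ i, b i ≠ u) ∧ (∀ i j, a i ≠ b j) ∧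
  (∀ i, G.Adj u (a i)) ∧ (∀ i, G.Adj (a i) (b i)) ∧
  (∀ i, ¬ G.Adj u (b i)) ∧
  (∀ i j, i ≠ j → ¬ G.Adj (a i) (a j)) ∧
  (∀ i j, i ≠ j → ¬ G.Adj (b i) (b j)) ∧
  (∀ i j, i ≠ j → ¬ G.Adj (a i) (b j))

/-- The vertex set of the tree copy `(u, a, b)`. -/
def treeVerts {V : Type*} (k : ℕ) (u : V) (a b : Fin k → V) : Set V :=
  {u} ∪ Set.range a ∪ Set.range b

/-- The copy `(u, a, b)` of `T_k` is inclusionwise maximal among induced copies of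
simple trees in `G`. -/
def MaximalSimpleTreeCopy {V : Type*} (G : SimpleGraph V) (k : ℕ) (u : V)
    (a b : Fin k → V) : Prop :=
  IsSimpleTreeCopy G k u a b ∧
  ∀ (m : ℕ) (u' : V) (a' b' : Fin m → V), IsSimpleTreeCopy G m u' a' b' →
    treeVerts k u a b ⊆ treeVerts m u' a' b' →
    treeVerts k u a b = treeVerts m u' a' b'


lemma S113_of {V : Type} (G : SimpleGraph V) (v : Fin 6 → V)
 (h01 : G.Adj (v 0) (v 1)) (h02 : G.Adj (v 0) (v 2)) (h03 : G.Adj (v 0) (v 3))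
 (h34 : G.Adj (v 3) (v 4)) (h45 : G.Adj (v 4) (v 5))
 (n12 : ¬G.Adj (v 1) (v 2)) (n13 : ¬G.Adj (v 1) (v 3)) (n14 : ¬G.Adj (v 1) (v 4))
 (n15 : ¬G.Adj (v 1) (v 5)) (n23 : ¬G.Adj (v 2) (v 3)) (n24 : ¬G.Adj (v 2) (v 4))
 (n25 : ¬G.Adj (v 2) (v 5)) (n04 : ¬G.Adj (v 0) (v 4)) (n05 : ¬G.Adj (v 0) (v 5))
 (n35 : ¬G.Adj (v 3) (v 5))
 (d12 : v 1 ≠ v 2) (d13 : v 1 ≠ v 3) (d14 : v 1 ≠ v 4) (d15 : v 1 ≠ v 5)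
 (d23 : v 2 ≠ v 3) (d24 : v 2 ≠ v 4) (d25 : v 2 ≠ v 5) (d04 : v 0 ≠ v 4)
 (d05 : v 0 ≠ v 5) (d35 : v 3 ≠ v 5) :
 Nonempty (S113 ↪g G) := by
  have inj : Function.Injective v := by
    intro i j h
    fin_cases i <;> fin_cases j <;>
      first
        | rfl
        | (exact absurd h (by assumption))
        | (exact absurd h.symm (by assumption))
        | (exact absurd h (fun hh => G.ne_of_adj (by assumption) hh))
        | (exact absurd h (fun hh => G.ne_of_adj (by assumption) hh.symm))
  refine ⟨⟨⟨v, inj⟩, ?_⟩⟩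
  intro i j
  fin_cases i <;> fin_cases j <;>
    simp_all [S113, SimpleGraph.fromRel_adj, G.adj_comm, Fin.ext_iff, - Fin.val_eq_zero_iff] <;>
    first
      | omega
      | exact h01.symm
      | exact h02.symm
      | exact h03.symm
      | exact h34.symm
      | exact h45.symm

set_option maxHeartbeats 1000000 in
/-- Structure around a maximal induced copy of `T_k` (`k ≥ 3`) in a bipartite
`S_{1,1,3}`-free graph: statements (i)–(viii) of Lemma 3. -/
theorem statement10 {V : Type} [Fintype V] (G : SimpleGraph V)
    (hbip : ∃ Wp Bp : Set V, IsBipartition G Wp Bp)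
    (hfree : IsEmpty (S113 ↪g G))
    (k : ℕ) (hk : 3 ≤ k) (u : V) (a b : Fin k → V)
    (hmax : MaximalSimpleTreeCopy G k u a b) :
    let A0 : Set V := Set.range a
    let B0 : Set V := Set.range b
    let B1 : Set V := NSet G B0 \ A0
    let B1' : Set V := {v | v ∈ B1 ∧ ∃! w, w ∈ B0 ∧ G.Adj v w}
    let B1'' : Set V := {v | v ∈ B1 ∧ ∀ w ∈ B0, G.Adj v w}
    let A1 : Set V := NSet G A0 \ ({u} ∪ B0)
    let C : Set V := G.neighborSet u \ (A0 ∪ B1)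
    let D1 : Set V := NSet G A1 \ (C ∪ A0 ∪ B1)
    let D2 : Set V := NSet G B1 \ ({u} ∪ B0 ∪ A1)
    (∀ v ∈ B1, G.Adj u v) ∧
    (∀ v ∈ A1, ∀ i, G.Adj v (a i)) ∧
    (∀ v ∈ C, ∀ w, G.Adj v w → w ∈ ({u} : Set V) ∪ A1) ∧
    (∀ v ∈ D1, ∀ w, G.Adj v w → w ∈ A1) ∧
    (B1 = B1' ∪ B1'') ∧
    (B1' = ∅ ∨ B1'' = ∅) ∧
    (∀ v ∈ B1', ∀ w, G.Adj v w → w ∈ ({u} : Set V) ∪ B0 ∪ A1) ∧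
    (∀ v ∈ D2, ∀ w, G.Adj v w → w ∈ B1) := by
  intro A0 B0 B1 B1' B1'' A1 C D1 D2
  classical
  obtain ⟨Wp, Bp, hcov, hdisj, hiW, hiB⟩ := hbip
  obtain ⟨⟨hainj, hbinj, hau, hbu, hab, hua, hab2, hub, haa, hbb, haibj⟩, hmaxl⟩ := hmax
  -- sides of the bipartition
  have hne2 : ∀ x y, G.Adj x y → ¬((x ∈ Wp) ↔ (y ∈ Wp)) := by
    intro x y hxy hiff
    by_cases hx : x ∈ Wp
    · exact hiW hx (hiff.mp hx) hxy.ne hxy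
    · have hx2 : x ∈ Wp ∪ Bp := hcov.symm ▸ Set.mem_univ x
      have hy2 : y ∈ Wp ∪ Bp := hcov.symm ▸ Set.mem_univ y
      rw [Set.mem_union] at hx2 hy2
      have hxB : x ∈ Bp := by tauto
      have hyB : y ∈ Bp := by tauto
      exact hiB hxB hyB hxy.ne hxy
  set U : V → Prop := fun x => (x ∈ Wp ↔ u ∈ Wp) with hUdef
  have hUu : U u := Iff.rfl
  have hUadj : ∀ x y, G.Adj x y → (U x ↔ ¬ U y) := by
    intro x y hxy
    have h := hne2 x y hxy
    simp only [hUdef]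
    tauto
  have hUsame : ∀ x y, (U x ↔ U y) → ¬ G.Adj x y := by
    intro x y h hxy
    have h2 := hUadj x y hxy
    tauto
  have hUa : ∀ i, ¬ U (a i) := fun i => (hUadj u (a i) (hua i)).mp hUu
  have hUb : ∀ i, U (b i) := by
    intro i
    have h1 := hUadj (a i) (b i) (hab2 i)
    have h2 := hUa i
    tauto
  have hnotA0 : ∀ x, U x → x ∉ Set.range a := by
    rintro x hx ⟨i, rfl⟩; exact hUa i hx
  have hnotB0 : ∀ x, ¬ U x → x ∉ Set.range b := by
    rintro x hx ⟨i, rfl⟩; exact hx (hUb i)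
  have hneu : ∀ x, ¬ U x → x ≠ u := by
    rintro x hx rfl; exact hx hUu
  -- two other indices
  have h3 : ∀ i : Fin k, ∃ j l : Fin k, j ≠ i ∧ l ≠ i ∧ j ≠ l := by
    intro i
    by_cases h0 : (i : ℕ) = 0
    · exact ⟨⟨1, by omega⟩, ⟨2, by omega⟩,
        fun h => by simp [Fin.ext_iff] at h; omega,
        fun h => by simp [Fin.ext_iff] at h; omega,
        fun h => by simp [Fin.ext_iff] at h⟩
    · by_cases h1 : (i : ℕ) = 1
      · exact ⟨⟨0, by omega⟩, ⟨2, by omega⟩,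
          fun h => by simp [Fin.ext_iff] at h; omega,
          fun h => by simp [Fin.ext_iff] at h; omega,
          fun h => by simp [Fin.ext_iff] at h⟩
      · exact ⟨⟨0, by omega⟩, ⟨1, by omega⟩,
          fun h => by simp [Fin.ext_iff] at h; omega,
          fun h => by simp [Fin.ext_iff] at h; omega,
          fun h => by simp [Fin.ext_iff] at h⟩
  -- basic facts about members of B1 and A1
  have hB1 : ∀ v, v ∈ B1 → (¬ U v ∧ v ∉ Set.range a ∧ ∃ i, G.Adj v (b i)) := by
    intro v hv
    have hv' : (∃ z ∈ Set.range b, G.Adj z v) ∧ v ∉ Set.range a := hv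
    obtain ⟨⟨z, ⟨i, rfl⟩, hzv⟩, hva⟩ := hv'
    have hUv : ¬ U v := by
      have h1 := hUadj (b i) v hzv
      have h2 := hUb i
      tauto
    exact ⟨hUv, hva, i, hzv.symm⟩
  have hA1 : ∀ v, v ∈ A1 →
      (U v ∧ v ≠ u ∧ v ∉ Set.range b ∧ v ∉ Set.range a ∧ ∃ j, G.Adj v (a j)) := by
    intro v hv
    have hv' : (∃ z ∈ Set.range a, G.Adj z v) ∧ v ∉ {u} ∪ Set.range b := hv
    obtain ⟨⟨z, ⟨j, rfl⟩, hzv⟩, hvnot⟩ := hv'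
    have hUv : U v := by
      have h1 := hUadj (a j) v hzv
      have h2 := hUa j
      tauto
    exact ⟨hUv, fun h => hvnot (Or.inl h), fun h => hvnot (Or.inr h),
      hnotA0 v hUv, j, hzv.symm⟩
  -- (i)
  have claim1 : ∀ v ∈ B1, G.Adj u v := by
    intro v hv
    obtain ⟨hUv, hvA0, i, hvbi⟩ := hB1 v hv
    by_contra huv
    obtain ⟨j, l, hji, hli, hjl⟩ := h3 i
    obtain ⟨e⟩ := S113_of G ![u, a j, a l, a i, b i, v]
      (hua j) (hua l) (hua i) (hab2 i) hvbi.symm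
      (haa j l hjl) (haa j i hji) (haibj j i hji)
      (hUsame (a j) v (iff_of_false (hUa j) hUv))
      (haa l i hli) (haibj l i hli)
      (hUsame (a l) v (iff_of_false (hUa l) hUv))
      (hub i) huv
      (hUsame (a i) v (iff_of_false (hUa i) hUv))
      (fun h => hjl (hainj h)) (fun h => hji (hainj h)) (hab j i)
      (fun h => hvA0 ⟨j, h⟩)
      (fun h => hli (hainj h)) (hab l i)
      (fun h => hvA0 ⟨l, h⟩)
      ((hbu i).symm) ((hneu v hUv).symm)
      (fun h => hvA0 ⟨i, h⟩)
    exact hfree.false e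
  -- (ii)
  have claim2 : ∀ v ∈ A1, ∀ i, G.Adj v (a i) := by
    intro v hv i
    obtain ⟨hUv, hvu, hvB0, hvA0, j, hvaj⟩ := hA1 v hv
    by_cases hij : i = j
    · exact hij ▸ hvaj
    by_contra hvai
    obtain ⟨e⟩ := S113_of G ![a j, b j, v, u, a i, b i]
      (hab2 j) hvaj.symm (hua j).symm (hua i) (hab2 i)
      (hUsame (b j) v (iff_of_true (hUb j) hUv))
      (fun h => hub j h.symm)
      (fun h => haibj i j hij h.symm)
      (hbb j i (fun h => hij h.symm))
      (hUsame v u (iff_of_true hUv hUu))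
      hvai
      (hUsame v (b i) (iff_of_true hUv (hUb i)))
      (haa j i (fun h => hij h.symm))
      (haibj j i (fun h => hij h.symm))
      (hub i)
      (fun h => hvB0 ⟨j, h⟩) (hbu j) ((hab i j).symm)
      (fun h => hij (hbinj h.symm))
      hvu (fun h => hvA0 ⟨i, h.symm⟩) (fun h => hvB0 ⟨i, h.symm⟩)
      (fun h => hij (hainj h.symm))
      (hab j i) ((hbu i).symm)
    exact hfree.false e
  -- (iii)
  have claim3 : ∀ v ∈ C, ∀ w, G.Adj v w → w ∈ ({u} : Set V) ∪ A1 := by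
    intro v hv w hvw
    have hv' : G.Adj u v ∧ v ∉ Set.range a ∪ B1 := hv
    obtain ⟨hvu, hvnot⟩ := hv'
    have hvA0 : v ∉ Set.range a := fun h => hvnot (Or.inl h)
    have hvB1 : v ∉ B1 := fun h => hvnot (Or.inr h)
    have hUv : ¬ U v := (hUadj u v hvu).mp hUu
    have hvNb : ∀ i, ¬ G.Adj v (b i) := by
      intro i h
      exact hvB1 ⟨⟨b i, ⟨i, rfl⟩, h.symm⟩, hvA0⟩
    by_contra hcon
    have hwu : w ≠ u := fun h => hcon (Or.inl h)
    have hwA1 : w ∉ A1 := fun h => hcon (Or.inr h)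
    have hUw : U w := by
      have h1 := hUadj v w hvw
      tauto
    have hwB0 : w ∉ Set.range b := by rintro ⟨i, rfl⟩; exact hvNb i hvw
    have hwNa : ∀ i, ¬ G.Adj w (a i) := by
      intro i h
      exact hwA1 ⟨⟨a i, ⟨i, rfl⟩, h.symm⟩, fun hm => hm.elim hwu hwB0⟩
    have hwNu : ¬ G.Adj w u := hUsame w u (iff_of_true hUw hUu)
    have hwNb : ∀ i, ¬ G.Adj w (b i) := fun i => hUsame w (b i) (iff_of_true hUw (hUb i))
    have hvNa : ∀ i, ¬ G.Adj v (a i) := fun i => hUsame v (a i) (iff_of_false hUv (hUa i))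
    have hvneu : v ≠ u := hvu.ne'
    have hcopy : IsSimpleTreeCopy G (k+1) u (Fin.snoc a v) (Fin.snoc b w) := by
      refine ⟨?_, ?_, ?_, ?_, ?_, ?_, ?_, ?_, ?_, ?_, ?_⟩
      · intro i j h
        rcases Fin.eq_castSucc_or_eq_last i with ⟨i', rfl⟩ | rfl <;>
          rcases Fin.eq_castSucc_or_eq_last j with ⟨j', rfl⟩ | rfl <;>
          simp only [Fin.snoc_castSucc, Fin.snoc_last] at h
        · exact congrArg Fin.castSucc (hainj h)
        · exact absurd ⟨i', h⟩ hvA0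
        · exact absurd ⟨j', h.symm⟩ hvA0
        · rfl
      · intro i j h
        rcases Fin.eq_castSucc_or_eq_last i with ⟨i', rfl⟩ | rfl <;>
          rcases Fin.eq_castSucc_or_eq_last j with ⟨j', rfl⟩ | rfl <;>
          simp only [Fin.snoc_castSucc, Fin.snoc_last] at h
        · exact congrArg Fin.castSucc (hbinj h)
        · exact absurd ⟨i', h⟩ hwB0
        · exact absurd ⟨j', h.symm⟩ hwB0
        · rfl
      · intro i
        rcases Fin.eq_castSucc_or_eq_last i with ⟨i', rfl⟩ | rfl <;>
          simp only [Fin.snoc_castSucc, Fin.snoc_last]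
        · exact hau i'
        · exact hvneu
      · intro i
        rcases Fin.eq_castSucc_or_eq_last i with ⟨i', rfl⟩ | rfl <;>
          simp only [Fin.snoc_castSucc, Fin.snoc_last]
        · exact hbu i'
        · exact hwu
      · intro i j
        rcases Fin.eq_castSucc_or_eq_last i with ⟨i', rfl⟩ | rfl <;>
          rcases Fin.eq_castSucc_or_eq_last j with ⟨j', rfl⟩ | rfl <;>
          simp only [Fin.snoc_castSucc, Fin.snoc_last]
        · exact hab i' j'
        · exact fun h => hUa i' (by rw [h]; exact hUw)
        · exact fun h => hUv (by rw [h]; exact hUb j')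
        · exact hvw.ne
      · intro i
        rcases Fin.eq_castSucc_or_eq_last i with ⟨i', rfl⟩ | rfl <;>
          simp only [Fin.snoc_castSucc, Fin.snoc_last]
        · exact hua i'
        · exact hvu
      · intro i
        rcases Fin.eq_castSucc_or_eq_last i with ⟨i', rfl⟩ | rfl <;>
          simp only [Fin.snoc_castSucc, Fin.snoc_last]
        · exact hab2 i'
        · exact hvw
      · intro i
        rcases Fin.eq_castSucc_or_eq_last i with ⟨i', rfl⟩ | rfl <;>
          simp only [Fin.snoc_castSucc, Fin.snoc_last]
        · exact hub i'
        · exact fun h => hwNu h.symm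
      · intro i j hij
        rcases Fin.eq_castSucc_or_eq_last i with ⟨i', rfl⟩ | rfl <;>
          rcases Fin.eq_castSucc_or_eq_last j with ⟨j', rfl⟩ | rfl <;>
          simp only [Fin.snoc_castSucc, Fin.snoc_last]
        · exact haa i' j' (fun h => hij (congrArg Fin.castSucc h))
        · exact fun h => hvNa i' h.symm
        · exact hvNa j'
        · exact absurd rfl hij
      · intro i j hij
        rcases Fin.eq_castSucc_or_eq_last i with ⟨i', rfl⟩ | rfl <;>
          rcases Fin.eq_castSucc_or_eq_last j with ⟨j', rfl⟩ | rfl <;>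
          simp only [Fin.snoc_castSucc, Fin.snoc_last]
        · exact hbb i' j' (fun h => hij (congrArg Fin.castSucc h))
        · exact fun h => hwNb i' h.symm
        · exact hwNb j'
        · exact absurd rfl hij
      · intro i j hij
        rcases Fin.eq_castSucc_or_eq_last i with ⟨i', rfl⟩ | rfl <;>
          rcases Fin.eq_castSucc_or_eq_last j with ⟨j', rfl⟩ | rfl <;>
          simp only [Fin.snoc_castSucc, Fin.snoc_last]
        · exact haibj i' j' (fun h => hij (congrArg Fin.castSucc h))
        · exact fun h => hwNa i' h.symm
        · exact hvNb j'
        · exact absurd rfl hij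
    have hsub : treeVerts k u a b ⊆ treeVerts (k+1) u (Fin.snoc a v) (Fin.snoc b w) := by
      intro x hx
      have hx' : (x ∈ ({u} : Set V) ∨ x ∈ Set.range a) ∨ x ∈ Set.range b := hx
      rcases hx' with (hx | ⟨i, rfl⟩) | ⟨i, rfl⟩
      · exact Or.inl (Or.inl hx)
      · exact Or.inl (Or.inr ⟨i.castSucc, by simp⟩)
      · exact Or.inr ⟨i.castSucc, by simp⟩
    have heq := hmaxl (k+1) u _ _ hcopy hsub
    have hwmem : w ∈ treeVerts k u a b := by
      rw [heq]
      exact Or.inr ⟨Fin.last k, by simp⟩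
    have hwmem' : (w ∈ ({u} : Set V) ∨ w ∈ Set.range a) ∨ w ∈ Set.range b := hwmem
    rcases hwmem' with (h | ⟨i, hi⟩) | h
    · exact hwu h
    · exact hUa i (by rw [hi]; exact hUw)
    · exact hwB0 h
  -- (iv)
  have claim4 : ∀ v ∈ D1, ∀ w, G.Adj v w → w ∈ A1 := by
    intro v hv w hvw
    have hv' : (∃ z ∈ A1, G.Adj z v) ∧ v ∉ C ∪ Set.range a ∪ B1 := hv
    obtain ⟨⟨x, hxA1, hxv⟩, hvnot⟩ := hv'
    have hvC : v ∉ C := fun h => hvnot (Or.inl (Or.inl h))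
    have hvA0 : v ∉ Set.range a := fun h => hvnot (Or.inl (Or.inr h))
    have hvB1 : v ∉ B1 := fun h => hvnot (Or.inr h)
    obtain ⟨hUx, hxu, hxB0, hxA0, _⟩ := hA1 x hxA1
    have hUv : ¬ U v := by
      have h1 := hUadj x v hxv
      tauto
    have hvNu : ¬ G.Adj v u := by
      intro h
      exact hvC ⟨h.symm, fun hm => hm.elim hvA0 hvB1⟩
    have hvNb : ∀ i, ¬ G.Adj v (b i) := by
      intro i h
      exact hvB1 ⟨⟨b i, ⟨i, rfl⟩, h.symm⟩, hvA0⟩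
    by_contra hwA1
    have hUw : U w := by
      have h1 := hUadj v w hvw
      tauto
    have hwu : w ≠ u := fun h => hvNu (h ▸ hvw)
    have hwB0 : w ∉ Set.range b := by rintro ⟨i, rfl⟩; exact hvNb i hvw
    have hwNa : ∀ i, ¬ G.Adj w (a i) := by
      intro i h
      exact hwA1 ⟨⟨a i, ⟨i, rfl⟩, h.symm⟩, fun hm => hm.elim hwu hwB0⟩
    have i0 : Fin k := ⟨0, by omega⟩
    have hxa0 := claim2 x hxA1 i0
    obtain ⟨e⟩ := S113_of G ![a i0, u, b i0, x, v, w]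
      (hua i0).symm (hab2 i0) hxa0.symm hxv hvw
      (hub i0)
      (hUsame u x (iff_of_true hUu hUx))
      (fun h => hvNu h.symm)
      (hUsame u w (iff_of_true hUu hUw))
      (hUsame (b i0) x (iff_of_true (hUb i0) hUx))
      (fun h => hvNb i0 h.symm)
      (hUsame (b i0) w (iff_of_true (hUb i0) hUw))
      (hUsame (a i0) v (iff_of_false (hUa i0) hUv))
      (fun h => hwNa i0 h.symm)
      (hUsame x w (iff_of_true hUx hUw))
      ((hbu i0).symm) hxu.symm ((hneu v hUv).symm) hwu.symm
      (fun h => hxB0 ⟨i0, h⟩)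
      (fun (h : b i0 = v) => hUv (by rw [← h]; exact hUb i0))
      (fun h => hwB0 ⟨i0, h⟩)
      (fun h => hvA0 ⟨i0, h⟩)
      (fun (h : a i0 = w) => hUa i0 (by rw [h]; exact hUw))
      (fun (h : x = w) => hwNa i0 (by rw [← h]; exact hxa0))
    exact hfree.false e
  -- adjacency to two leaves implies adjacency to all
  have htwo : ∀ v ∈ B1, ∀ i j l : Fin k, i ≠ j → G.Adj v (b i) → G.Adj v (b j) →
      G.Adj v (b l) := by
    intro v hv i j l hij hvi hvj
    by_contra hvl
    have hli : l ≠ i := fun h => hvl (by rw [h]; exact hvi)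
    have hlj : l ≠ j := fun h => hvl (by rw [h]; exact hvj)
    obtain ⟨hUv, hvA0, _⟩ := hB1 v hv
    have huv := claim1 v hv
    obtain ⟨e⟩ := S113_of G ![v, b i, b j, u, a l, b l]
      hvi hvj huv.symm (hua l) (hab2 l)
      (hbb i j hij)
      (fun h => hub i h.symm)
      (fun h => haibj l i hli h.symm)
      (hbb i l (fun h => hli h.symm))
      (fun h => hub j h.symm)
      (fun h => haibj l j hlj h.symm)
      (hbb j l (fun h => hlj h.symm))
      (hUsame v (a l) (iff_of_false hUv (hUa l)))
      hvl (hub l)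
      (fun h => hij (hbinj h)) (hbu i) ((hab l i).symm)
      (fun h => hli (hbinj h.symm))
      (hbu j) ((hab l j).symm)
      (fun h => hlj (hbinj h.symm))
      (fun h => hvA0 ⟨l, h.symm⟩)
      (fun (h : v = b l) => hUv (by rw [h]; exact hUb l))
      ((hbu l).symm)
    exact hfree.false e
  -- (v)
  have claim5 : B1 = B1' ∪ B1'' := by
    apply Set.Subset.antisymm
    · intro v hv
      by_cases hall : ∀ i, G.Adj v (b i)
      · right
        exact ⟨hv, by rintro w ⟨i, rfl⟩; exact hall i⟩
      · left
        push_neg at hall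
        obtain ⟨l, hvl⟩ := hall
        obtain ⟨hUv, hvA0, i, hvbi⟩ := hB1 v hv
        refine ⟨hv, b i, ⟨⟨i, rfl⟩, hvbi⟩, ?_⟩
        rintro w ⟨⟨j, rfl⟩, hvbj⟩
        by_contra hne
        have hji : j ≠ i := fun h => hne (congrArg b h)
        exact hvl (htwo v hv j i l hji hvbj hvbi)
    · rintro v (hv | hv)
      · exact hv.1
      · exact hv.1
  -- (vi)
  have claim6 : B1' = ∅ ∨ B1'' = ∅ := by
    by_contra hcon
    push_neg at hcon
    obtain ⟨h1, h2⟩ := hcon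
    obtain ⟨x, hx⟩ := h1
    obtain ⟨y, hy⟩ := h2
    obtain ⟨hxB1, w0, ⟨⟨i, rfl⟩, hxbi⟩, huni⟩ := hx
    obtain ⟨hyB1, hyall⟩ := hy
    have hyb : ∀ m, G.Adj y (b m) := fun m => hyall (b m) ⟨m, rfl⟩
    have hxNbj : ∀ j, j ≠ i → ¬ G.Adj x (b j) := by
      intro j hj h
      exact hj (hbinj (huni (b j) ⟨⟨j, rfl⟩, h⟩))
    obtain ⟨hUx, hxA0, _⟩ := hB1 x hxB1
    obtain ⟨hUy, hyA0, _⟩ := hB1 y hyB1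
    obtain ⟨j, _, hji, _⟩ := h3 i
    obtain ⟨e⟩ := S113_of G ![b i, a i, x, y, b j, a j]
      (hab2 i).symm hxbi.symm (hyb i).symm (hyb j) (hab2 j).symm
      (hUsame (a i) x (iff_of_false (hUa i) hUx))
      (hUsame (a i) y (iff_of_false (hUa i) hUy))
      (haibj i j (fun h => hji h.symm))
      (haa i j (fun h => hji h.symm))
      (hUsame x y (iff_of_false hUx hUy))
      (hxNbj j hji)
      (hUsame x (a j) (iff_of_false hUx (hUa j)))
      (hbb i j (fun h => hji h.symm))
      (fun h => haibj j i hji h.symm)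
      (hUsame y (a j) (iff_of_false hUy (hUa j)))
      (fun h => hxA0 ⟨i, h⟩)
      (fun h => hyA0 ⟨i, h⟩)
      (hab i j)
      (fun h => hji (hainj h).symm)
      (fun (h : x = y) => hxNbj j hji (by rw [h]; exact hyb j))
      (fun (h : x = b j) => hUx (by rw [h]; exact hUb j))
      (fun h => hxA0 ⟨j, h.symm⟩)
      (fun h => hji (hbinj h).symm)
      ((hab j i).symm)
      (fun h => hyA0 ⟨j, h.symm⟩)
    exact hfree.false e
  -- (vii)
  have claim7 : ∀ v ∈ B1', ∀ w, G.Adj v w → w ∈ ({u} : Set V) ∪ B0 ∪ A1 := by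
    intro v hv w hvw
    obtain ⟨hvB1, w0, ⟨⟨i, rfl⟩, hvbi⟩, huni⟩ := hv
    obtain ⟨hUv, hvA0, _⟩ := hB1 v hvB1
    have huv := claim1 v hvB1
    have hvNbj : ∀ j, j ≠ i → ¬ G.Adj v (b j) := by
      intro j hj h
      exact hj (hbinj (huni (b j) ⟨⟨j, rfl⟩, h⟩))
    by_contra hcon
    have hwu : w ≠ u := fun h => hcon (Or.inl (Or.inl h))
    have hwB0 : w ∉ Set.range b := fun h => hcon (Or.inl (Or.inr h))
    have hwA1 : w ∉ A1 := fun h => hcon (Or.inr h)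
    have hUw : U w := by
      have h1 := hUadj v w hvw
      tauto
    have hwNa : ∀ m, ¬ G.Adj w (a m) := by
      intro m h
      exact hwA1 ⟨⟨a m, ⟨m, rfl⟩, h.symm⟩, fun hm => hm.elim hwu hwB0⟩
    have hwNb : ∀ m, ¬ G.Adj w (b m) := fun m => hUsame w (b m) (iff_of_true hUw (hUb m))
    have hwNu : ¬ G.Adj w u := hUsame w u (iff_of_true hUw hUu)
    obtain ⟨j, _, hji, _⟩ := h3 i
    obtain ⟨e⟩ := S113_of G ![v, b i, w, u, a j, b j]
      hvbi hvw huv.symm (hua j) (hab2 j)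
      (fun h => hwNb i h.symm)
      (fun h => hub i h.symm)
      (fun h => haibj j i hji h.symm)
      (hbb i j (fun h => hji h.symm))
      hwNu
      (hwNa j)
      (hwNb j)
      (hUsame v (a j) (iff_of_false hUv (hUa j)))
      (hvNbj j hji)
      (hub j)
      (fun h => hwB0 ⟨i, h⟩)
      (hbu i)
      ((hab j i).symm)
      (fun h => hji (hbinj h.symm))
      hwu
      (fun (h : w = a j) => hUa j (by rw [← h]; exact hUw))
      (fun h => hwB0 ⟨j, h.symm⟩)
      (fun h => hvA0 ⟨j, h.symm⟩)
      (fun (h : v = b j) => hUv (by rw [h]; exact hUb j))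
      ((hbu j).symm)
    exact hfree.false e
  -- (viii)
  have claim8 : ∀ v ∈ D2, ∀ w, G.Adj v w → w ∈ B1 := by
    intro v hv w hvw
    have hv' : (∃ z ∈ B1, G.Adj z v) ∧ v ∉ {u} ∪ Set.range b ∪ A1 := hv
    obtain ⟨⟨x, hxB1, hxv⟩, hvnot⟩ := hv'
    have hvu : v ≠ u := fun h => hvnot (Or.inl (Or.inl h))
    have hvB0 : v ∉ Set.range b := fun h => hvnot (Or.inl (Or.inr h))
    have hvA1 : v ∉ A1 := fun h => hvnot (Or.inr h)
    obtain ⟨hUx, hxA0, _⟩ := hB1 x hxB1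
    have hUv : U v := by
      have h1 := hUadj x v hxv
      tauto
    have hvNa : ∀ m, ¬ G.Adj v (a m) := by
      intro m h
      exact hvA1 ⟨⟨a m, ⟨m, rfl⟩, h.symm⟩, fun hm => hm.elim hvu hvB0⟩
    have hvNu : ¬ G.Adj v u := hUsame v u (iff_of_true hUv hUu)
    by_contra hwB1
    have hUw : ¬ U w := by
      have h1 := hUadj v w hvw
      tauto
    have hwA0 : w ∉ Set.range a := by
      rintro ⟨m, rfl⟩; exact hvNa m hvw
    have hwNb : ∀ m, ¬ G.Adj w (b m) := by
      intro m h
      exact hwB1 ⟨⟨b m, ⟨m, rfl⟩, h.symm⟩, hwA0⟩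
    by_cases hwu : G.Adj u w
    · have hwC : w ∈ C := ⟨hwu, fun hm => hm.elim hwA0 hwB1⟩
      have := claim3 w hwC v hvw.symm
      rcases this with h | h
      · exact hvu h
      · exact hvA1 h
    · obtain ⟨i0, i1, -, -, hi01⟩ := h3 ⟨0, by omega⟩
      obtain ⟨e⟩ := S113_of G ![u, a i0, a i1, x, v, w]
        (hua i0) (hua i1) (claim1 x hxB1) hxv hvw
        (haa i0 i1 hi01)
        (hUsame (a i0) x (iff_of_false (hUa i0) hUx))
        (fun h => hvNa i0 h.symm)
        (hUsame (a i0) w (iff_of_false (hUa i0) hUw))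
        (hUsame (a i1) x (iff_of_false (hUa i1) hUx))
        (fun h => hvNa i1 h.symm)
        (hUsame (a i1) w (iff_of_false (hUa i1) hUw))
        (fun h => hvNu h.symm)
        hwu
        (hUsame x w (iff_of_false hUx hUw))
        (fun h => hi01 (hainj h))
        (fun h => hxA0 ⟨i0, h⟩)
        (fun (h : a i0 = v) => hUa i0 (by rw [h]; exact hUv))
        (fun h => hwA0 ⟨i0, h⟩)
        (fun h => hxA0 ⟨i1, h⟩)
        (fun (h : a i1 = v) => hUa i1 (by rw [h]; exact hUv))
        (fun h => hwA0 ⟨i1, h⟩)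
        hvu.symm
        (fun (h : u = w) => hUw (by rw [← h]))
        (fun (h : x = w) => hwB1 (by rw [← h]; exact hxB1))
      exact hfree.false e
  exact ⟨claim1, claim2, claim3, claim4, claim5, claim6, claim7, claim8⟩
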